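/- Let μ be a positive Borel measure on V* whose support is contained in a pointed closed convex cone C (C ∩ −C = {0}), and suppose there exists x in the interior of the dual cone C* and constants c, k, δ > 0 with L(μ)(t·x) ≤ c·t^{−k} for all 0 < t ≤ δ. Then μ is tempered: there exists m ∈ ℕ with ∫ (1+‖α‖²)^{−m} dμ(α) < ∞. -/

import Mathlib

open MeasureTheory
open scoped ENNReal

theorem tempered_of_poly_growth {W : Type*} [NormedAddCommGroup W] [MeasurableSpace W]
    [OpensMeasurableSpace W] (μ : Measure W) (c₀ R₀ k : ℝ) (hR₀ : 1 ≤ R₀) (hc₀ : 0 ≤ c₀)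
    (hk : 0 < k)
    (h : ∀ R : ℝ, R₀ ≤ R → μ (Metric.closedBall 0 R) ≤ ENNReal.ofReal (c₀ * R ^ k)) :
    ∃ m : ℕ, ∫⁻ α, (ENNReal.ofReal ((1 + ‖α‖ ^ 2) ^ m))⁻¹ ∂μ < ⊤ := by
  classical
  set m : ℕ := ⌈k⌉₊ with hm
  have hm1 : 1 ≤ m := Nat.one_le_iff_ne_zero.mpr (by
    simp [hm, Nat.ceil_eq_zero, not_le, hk])
  have hkm : k ≤ (m : ℝ) := Nat.le_ceil k
  refine ⟨m, ?_⟩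
  have hR₀pos : (0:ℝ) < R₀ := lt_of_lt_of_le one_pos hR₀
  set B : ℕ → Set W := fun n => Metric.closedBall 0 (R₀ * 2 ^ n) with hB
  set s : ℕ → Set W := fun n => Nat.casesOn n (B 0) (fun j => B (j + 1) \ B j) with hs
  have hcover : (⋃ n, s n) = Set.univ := by
    apply Set.eq_univ_of_forall
    intro a
    have hBsub : ∀ n, B n ⊆ ⋃ i, s i := by
      intro n
      induction n with
      | zero => exact Set.subset_iUnion s 0
      | succ j ih =>
        intro a ha
        by_cases hj : a ∈ B j
        · exact ih hj
        · exact Set.mem_iUnion.mpr ⟨j + 1, ⟨ha, hj⟩⟩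
    obtain ⟨n, hn⟩ := exists_nat_ge ‖a‖
    have h2 : (n:ℝ) ≤ 2 ^ n := by
      exact_mod_cast (Nat.lt_two_pow_self (n := n)).le
    refine hBsub n ?_
    simp only [hB, Metric.mem_closedBall, dist_zero_right]
    calc ‖a‖ ≤ (n:ℝ) := hn
      _ ≤ 2 ^ n := h2
      _ ≤ R₀ * 2 ^ n := by nlinarith [pow_pos (by norm_num : (0:ℝ) < 2) n]
  set K : ℝ := 2 * (c₀ * R₀ ^ k * 2 ^ m) with hK
  have hrpow_nn : (0:ℝ) ≤ R₀ ^ k := Real.rpow_nonneg hR₀pos.le k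
  have h2m : (1:ℝ) ≤ 2 ^ m := one_le_pow₀ (by norm_num)
  -- bound each piece
  have hterm : ∀ n, ∫⁻ a in s n, (ENNReal.ofReal ((1 + ‖a‖ ^ 2) ^ m))⁻¹ ∂μ ≤
      ENNReal.ofReal K * ((2:ℝ≥0∞)⁻¹) ^ n := by
    intro n
    match n with
    | 0 =>
      calc ∫⁻ a in s 0, (ENNReal.ofReal ((1 + ‖a‖ ^ 2) ^ m))⁻¹ ∂μ
          ≤ ∫⁻ _ in s 0, 1 ∂μ := by
            apply setLIntegral_mono' (by exact measurableSet_closedBall)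
            intro a _
            rw [ENNReal.inv_le_one]
            apply ENNReal.one_le_ofReal.mpr
            apply one_le_pow₀
            nlinarith [sq_nonneg ‖a‖]
        _ = μ (s 0) := by rw [setLIntegral_const, one_mul]
        _ ≤ ENNReal.ofReal (c₀ * (R₀ * 2 ^ 0) ^ k) := by
            apply h; simp
        _ ≤ ENNReal.ofReal K * ((2:ℝ≥0∞)⁻¹) ^ 0 := by
            simp only [pow_zero, mul_one]
            apply ENNReal.ofReal_le_ofReal
            nlinarith [mul_nonneg hc₀ hrpow_nn]
    | (j + 1) =>
      have hconst : ∀ a ∈ s (j + 1),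
          (ENNReal.ofReal ((1 + ‖a‖ ^ 2) ^ m))⁻¹ ≤ (ENNReal.ofReal ((4:ℝ) ^ (j * m)))⁻¹ := by
        intro a ha
        rw [ENNReal.inv_le_inv]
        apply ENNReal.ofReal_le_ofReal
        have hna : R₀ * 2 ^ j < ‖a‖ := by
          have := ha.2
          simp only [hB, Metric.mem_closedBall, dist_zero_right, not_le] at this
          exact this
        have h2j : (2:ℝ) ^ j ≤ ‖a‖ := by nlinarith [pow_pos (by norm_num : (0:ℝ) < 2) j]
        have h4j : (4:ℝ) ^ j ≤ 1 + ‖a‖ ^ 2 := by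
          have : ((2:ℝ) ^ j) ^ 2 ≤ ‖a‖ ^ 2 :=
            pow_le_pow_left₀ (pow_nonneg (by norm_num) j) h2j 2
          have h42 : (4:ℝ) ^ j = ((2:ℝ) ^ j) ^ 2 := by
            rw [← pow_mul, mul_comm, pow_mul]; norm_num
          nlinarith
        calc (4:ℝ) ^ (j * m) = ((4:ℝ) ^ j) ^ m := by rw [pow_mul]
          _ ≤ (1 + ‖a‖ ^ 2) ^ m := pow_le_pow_left₀ (by positivity) h4j m
      have hsm : MeasurableSet (s (j + 1)) :=
        (measurableSet_closedBall).diff measurableSet_closedBall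
      have hreal : (4:ℝ) ^ (j * m) * (c₀ * (R₀ * 2 ^ (j + 1)) ^ k) ≤
          (4:ℝ) ^ (j * m) * (K * (2⁻¹:ℝ) ^ (j + 1) * 4 ^ (j * m)) → True := fun _ => trivial
      calc ∫⁻ a in s (j + 1), (ENNReal.ofReal ((1 + ‖a‖ ^ 2) ^ m))⁻¹ ∂μ
          ≤ ∫⁻ _ in s (j + 1), (ENNReal.ofReal ((4:ℝ) ^ (j * m)))⁻¹ ∂μ :=
            setLIntegral_mono' hsm hconst
        _ = (ENNReal.ofReal ((4:ℝ) ^ (j * m)))⁻¹ * μ (s (j + 1)) := setLIntegral_const _ _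
        _ ≤ (ENNReal.ofReal ((4:ℝ) ^ (j * m)))⁻¹ * ENNReal.ofReal (c₀ * (R₀ * 2 ^ (j + 1)) ^ k) := by
            gcongr
            refine le_trans (measure_mono Set.diff_subset) (h _ ?_)
            nlinarith [pow_pos (by norm_num : (0:ℝ) < 2) (j+1), one_le_pow₀ (by norm_num : (1:ℝ) ≤ 2) (n := j+1)]
        _ = ENNReal.ofReal (((4:ℝ) ^ (j * m))⁻¹) * ENNReal.ofReal (c₀ * (R₀ * 2 ^ (j + 1)) ^ k) := by
            rw [ENNReal.ofReal_inv_of_pos (by positivity)]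
        _ = ENNReal.ofReal (((4:ℝ) ^ (j * m))⁻¹ * (c₀ * (R₀ * 2 ^ (j + 1)) ^ k)) :=
            (ENNReal.ofReal_mul (by positivity)).symm
        _ ≤ ENNReal.ofReal (K * (2⁻¹:ℝ) ^ (j + 1)) := by
            apply ENNReal.ofReal_le_ofReal
            -- real arithmetic
            have hstep : (R₀ * 2 ^ (j + 1)) ^ k ≤ R₀ ^ k * 2 ^ ((j + 1) * m) := by
              rw [Real.mul_rpow hR₀pos.le (by positivity)]
              gcongr
              calc ((2:ℝ) ^ (j + 1)) ^ k ≤ ((2:ℝ) ^ (j + 1)) ^ (m:ℝ) := by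
                    apply Real.rpow_le_rpow_of_exponent_le (one_le_pow₀ (by norm_num)) hkm
                _ = 2 ^ ((j + 1) * m) := by
                    rw [Real.rpow_natCast, ← pow_mul]
            have h4 : ((4:ℝ) ^ (j * m))⁻¹ = ((2:ℝ) ^ (j * m))⁻¹ * ((2:ℝ) ^ (j * m))⁻¹ := by
              rw [← mul_inv, ← pow_add]
              congr 1
              rw [show (4:ℝ) = 2 ^ 2 by norm_num, ← pow_mul]
              ring_nf
            have hexp : ((2:ℝ) ^ ((j + 1) * m)) = 2 ^ m * 2 ^ (j * m) := by
              rw [← pow_add]; ring_nf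
            have hjm : ((2:ℝ) ^ (j * m))⁻¹ ≤ ((2:ℝ) ^ j)⁻¹ := by
              apply inv_anti₀ (by positivity)
              apply pow_le_pow_right₀ (by norm_num)
              nlinarith
            calc ((4:ℝ) ^ (j * m))⁻¹ * (c₀ * (R₀ * 2 ^ (j + 1)) ^ k)
                ≤ ((4:ℝ) ^ (j * m))⁻¹ * (c₀ * (R₀ ^ k * 2 ^ ((j + 1) * m))) := by
                  gcongr
                _ = (c₀ * R₀ ^ k * 2 ^ m) * ((2:ℝ) ^ (j * m))⁻¹ := by
                  rw [h4, hexp]; field_simp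
                _ ≤ (c₀ * R₀ ^ k * 2 ^ m) * ((2:ℝ) ^ j)⁻¹ := by
                  gcongr
                _ = K * (2⁻¹:ℝ) ^ (j + 1) := by
                  rw [hK, inv_pow]
                  rw [pow_succ]
                  field_simp
        _ = ENNReal.ofReal K * ((2:ℝ≥0∞)⁻¹) ^ (j + 1) := by
            rw [ENNReal.ofReal_mul (by positivity), ENNReal.ofReal_pow (by norm_num)]
            congr 2
            rw [ENNReal.ofReal_inv_of_pos (by norm_num)]
            norm_num
  calc ∫⁻ a, (ENNReal.ofReal ((1 + ‖a‖ ^ 2) ^ m))⁻¹ ∂μ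
      = ∫⁻ a in ⋃ n, s n, (ENNReal.ofReal ((1 + ‖a‖ ^ 2) ^ m))⁻¹ ∂μ := by
        rw [hcover, setLIntegral_univ]
    _ ≤ ∑' n, ∫⁻ a in s n, (ENNReal.ofReal ((1 + ‖a‖ ^ 2) ^ m))⁻¹ ∂μ := lintegral_iUnion_le _ _
    _ ≤ ∑' n, ENNReal.ofReal K * ((2:ℝ≥0∞)⁻¹) ^ n := ENNReal.tsum_le_tsum hterm
    _ = ENNReal.ofReal K * ∑' n, ((2:ℝ≥0∞)⁻¹) ^ n := ENNReal.tsum_mul_left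
    _ < ⊤ := by
        rw [ENNReal.tsum_geometric, ENNReal.one_sub_inv_two, inv_inv]
        exact ENNReal.mul_lt_top ENNReal.ofReal_lt_top (by norm_num)

/-- The support of a Borel measure: points all of whose open neighborhoods
have positive measure. -/
def msupport {W : Type*} [TopologicalSpace W] [MeasurableSpace W]
    (μ : Measure W) : Set W :=
  {x | ∀ U : Set W, IsOpen U → x ∈ U → μ U ≠ 0}

theorem laplace_bound_implies_tempered {V : Type*} [NormedAddCommGroup V]
    [NormedSpace ℝ V] [FiniteDimensional ℝ V]
    [MeasurableSpace (V →L[ℝ] ℝ)] [BorelSpace (V →L[ℝ] ℝ)]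
    (μ : Measure (V →L[ℝ] ℝ))
    (C : Set (V →L[ℝ] ℝ)) (hCconv : Convex ℝ C) (hCclosed : IsClosed C)
    (hCcone : ∀ t : ℝ, 0 ≤ t → ∀ α ∈ C, t • α ∈ C)
    (hCpointed : C ∩ (-C) ⊆ {0})
    (hsupp : msupport μ ⊆ C)
    (x : V) (hx : x ∈ interior {v : V | ∀ α ∈ C, 0 ≤ α v})
    (c k δ : ℝ) (hc : 0 < c) (hk : 0 < k) (hδ : 0 < δ)
    (hbound : ∀ t : ℝ, 0 < t → t ≤ δ →
      (∫⁻ α, ENNReal.ofReal (Real.exp (-(α (t • x)))) ∂μ) ≤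
        ENNReal.ofReal (c * t ^ (-k))) :
    ∃ m : ℕ, ∫⁻ α, (ENNReal.ofReal ((1 + ‖α‖ ^ 2) ^ m))⁻¹ ∂μ < ⊤ := by
  set R₀ : ℝ := max 1 δ⁻¹ with hR₀def
  have hR₀1 : (1:ℝ) ≤ R₀ := le_max_left _ _
  apply tempered_of_poly_growth μ (c * Real.exp ‖x‖) R₀ k hR₀1
    (by positivity) hk
  intro R hR
  have hR1 : (1:ℝ) ≤ R := le_trans hR₀1 hR
  have hRpos : (0:ℝ) < R := lt_of_lt_of_le one_pos hR1
  set t : ℝ := R⁻¹ with htdef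
  have ht0 : 0 < t := inv_pos.mpr hRpos
  have htδ : t ≤ δ := by
    have h1 : δ⁻¹ ≤ R := le_trans (le_max_right _ _) hR
    calc t = R⁻¹ := rfl
      _ ≤ (δ⁻¹)⁻¹ := inv_anti₀ (inv_pos.mpr hδ) h1
      _ = δ := inv_inv δ
  have key : μ (Metric.closedBall 0 R) * ENNReal.ofReal (Real.exp (-‖x‖)) ≤
      ENNReal.ofReal (c * t ^ (-k)) := by
    calc μ (Metric.closedBall 0 R) * ENNReal.ofReal (Real.exp (-‖x‖))
        = ∫⁻ _ in Metric.closedBall 0 R, ENNReal.ofReal (Real.exp (-‖x‖)) ∂μ := by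
          rw [setLIntegral_const, mul_comm]
      _ ≤ ∫⁻ a in Metric.closedBall 0 R, ENNReal.ofReal (Real.exp (-(a (t • x)))) ∂μ := by
          apply setLIntegral_mono' measurableSet_closedBall
          intro a ha
          apply ENNReal.ofReal_le_ofReal
          apply Real.exp_le_exp.mpr
          rw [neg_le_neg_iff]
          have hna : ‖a‖ ≤ R := by
            simpa [dist_zero_right] using ha
          have h1 : a (t • x) = t * a x := by
            rw [a.map_smul, smul_eq_mul]
          have h2 : a x ≤ ‖a‖ * ‖x‖ := by
            calc a x ≤ |a x| := le_abs_self _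
              _ = ‖a x‖ := (Real.norm_eq_abs _).symm
              _ ≤ ‖a‖ * ‖x‖ := a.le_opNorm x
          calc a (t • x) = t * a x := h1
            _ ≤ t * (‖a‖ * ‖x‖) := by
                apply mul_le_mul_of_nonneg_left h2 ht0.le
            _ ≤ t * (R * ‖x‖) := by
                have : (0:ℝ) ≤ ‖x‖ := norm_nonneg x
                apply mul_le_mul_of_nonneg_left (by nlinarith) ht0.le
            _ = ‖x‖ := by
                rw [htdef]; field_simp
      _ ≤ ∫⁻ a, ENNReal.ofReal (Real.exp (-(a (t • x)))) ∂μ := setLIntegral_le_lintegral _ _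
      _ ≤ ENNReal.ofReal (c * t ^ (-k)) := hbound t ht0 htδ
  have hcancel : ENNReal.ofReal (Real.exp (-‖x‖)) * ENNReal.ofReal (Real.exp ‖x‖) = 1 := by
    rw [← ENNReal.ofReal_mul (Real.exp_pos _).le, ← Real.exp_add]
    simp
  have htk : t ^ (-k) = R ^ k := by
    rw [htdef, Real.inv_rpow hRpos.le, Real.rpow_neg hRpos.le, inv_inv]
  calc μ (Metric.closedBall 0 R)
      = μ (Metric.closedBall 0 R) * (ENNReal.ofReal (Real.exp (-‖x‖)) *
          ENNReal.ofReal (Real.exp ‖x‖)) := by rw [hcancel, mul_one]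
    _ = μ (Metric.closedBall 0 R) * ENNReal.ofReal (Real.exp (-‖x‖)) *
          ENNReal.ofReal (Real.exp ‖x‖) := by rw [mul_assoc]
    _ ≤ ENNReal.ofReal (c * t ^ (-k)) * ENNReal.ofReal (Real.exp ‖x‖) := by
        gcongr
    _ = ENNReal.ofReal (c * Real.exp ‖x‖ * R ^ k) := by
        rw [← ENNReal.ofReal_mul (by positivity), htk]
        ring_nf
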